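/- The tensor product over ℝ of two Weil ℝ-algebras is again a Weil ℝ-algebra; i.e., if W₁ and W₂ are finite-dimensional commutative local ℝ-algebras with residue field ℝ, then W₁ ⊗_ℝ W₂ is a finite-dimensional commutative local ℝ-algebra with residue field ℝ. -/

import Mathlib

open CategoryTheory CategoryTheory.Limits TensorProduct

noncomputable section

/-- A commutative `ℝ`-algebra is a *Weil algebra* if it is finite-dimensional, local,
with nilpotent maximal ideal and residue field `ℝ`. -/
def WeilPred (A : Type) [CommRing A] [Algebra ℝ A] : Prop :=
  FiniteDimensional ℝ A ∧ ∃ h : IsLocalRing A,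
    letI := h
    IsNilpotent (IsLocalRing.maximalIdeal A) ∧
      Function.Bijective (algebraMap ℝ (IsLocalRing.ResidueField A))

/-- Weil algebras as objects of the category `Under (CommRingCat.of ℝ)` of
commutative `ℝ`-algebras. -/
def IsWeil (A : Under (CommRingCat.of ℝ)) : Prop :=
  letI : Algebra ℝ A.right := A.hom.hom.toAlgebra
  WeilPred A.right

/-- The category `𝔚` of Weil `ℝ`-algebras. -/
abbrev WeilCat := ObjectProperty.FullSubcategory IsWeil

/-- The category of Weil spaces: functors `𝔚 ⥤ Sets`. -/
abbrev WeilSpace := WeilCat ⥤ Type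

end
set_option synthInstance.maxHeartbeats 1000000
set_option maxHeartbeats 1000000

theorem isNilpotent_of_mem_nilIdeal {R : Type*} [CommRing R] {I : Ideal R}
    (hI : IsNilpotent I) {a : R} (ha : a ∈ I) : IsNilpotent a := by
  obtain ⟨n, hn⟩ := hI
  have h2 := Ideal.pow_mem_pow ha n
  rw [hn] at h2
  exact ⟨n, by simpa using h2⟩

/-- Auxiliary: a Weil algebra has an `ℝ`-augmentation whose "kernel" is a nilpotent ideal. -/
theorem weil_aux {W : Type} [CommRing W] [Algebra ℝ W] (h : WeilPred W) :
    ∃ ε : W →ₐ[ℝ] ℝ, ∃ I : Ideal W, IsNilpotent I ∧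
      ∀ x, x - algebraMap ℝ W (ε x) ∈ I := by
  obtain ⟨hfd, hloc, hnil, hbij⟩ := h
  letI := hloc
  let e : ℝ ≃+* IsLocalRing.ResidueField W :=
    RingEquiv.ofBijective (algebraMap ℝ (IsLocalRing.ResidueField W)) hbij
  have halg : ∀ r : ℝ, IsLocalRing.residue W (algebraMap ℝ W r)
      = algebraMap ℝ (IsLocalRing.ResidueField W) r := by
    intro r
    rfl
  refine ⟨⟨e.symm.toRingHom.comp (IsLocalRing.residue W), fun r => ?_⟩,
      IsLocalRing.maximalIdeal W, hnil, fun x => ?_⟩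
  · show e.symm (IsLocalRing.residue W (algebraMap ℝ W r)) = r
    rw [halg]; exact e.symm_apply_apply r
  · rw [← IsLocalRing.ker_residue, RingHom.mem_ker, map_sub, halg]
    show IsLocalRing.residue W x - e (e.symm (IsLocalRing.residue W x)) = 0
    rw [e.apply_symm_apply, sub_self]

/-- the tensor product over `ℝ` of two Weil `ℝ`-algebras is a Weil `ℝ`-algebra. -/
theorem tensorProduct_isWeil (W₁ W₂ : Type) [CommRing W₁] [CommRing W₂]
    [Algebra ℝ W₁] [Algebra ℝ W₂] (h₁ : WeilPred W₁) (h₂ : WeilPred W₂) :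
    WeilPred (W₁ ⊗[ℝ] W₂) := by
  obtain ⟨ε₁, I₁, hI₁, hε₁⟩ := weil_aux h₁
  obtain ⟨ε₂, I₂, hI₂, hε₂⟩ := weil_aux h₂
  have hfd₁ := h₁.1
  have hfd₂ := h₂.1
  have hfd : FiniteDimensional ℝ (W₁ ⊗[ℝ] W₂) := Module.Finite.tensorProduct ℝ W₁ W₂
  let ε : (W₁ ⊗[ℝ] W₂) →ₐ[ℝ] ℝ := Algebra.TensorProduct.lift ε₁ ε₂ fun _ _ => Commute.all _ _
  let J : Ideal (W₁ ⊗[ℝ] W₂) := Ideal.map (Algebra.TensorProduct.includeLeft (S := ℝ)) I₁ ⊔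
      Ideal.map (Algebra.TensorProduct.includeRight (R := ℝ) (A := W₁)) I₂
  have hJnil : J ≤ nilradical (W₁ ⊗[ℝ] W₂) := by
    refine sup_le (Ideal.map_le_iff_le_comap.mpr fun a ha => ?_)
      (Ideal.map_le_iff_le_comap.mpr fun b hb => ?_)
    · exact mem_nilradical.mpr ((isNilpotent_of_mem_nilIdeal hI₁ ha).map
        (Algebra.TensorProduct.includeLeft (S := ℝ) : W₁ →ₐ[ℝ] (W₁ ⊗[ℝ] W₂)))
    · exact mem_nilradical.mpr ((isNilpotent_of_mem_nilIdeal hI₂ hb).map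
        (Algebra.TensorProduct.includeRight (R := ℝ) (A := W₁) : W₂ →ₐ[ℝ] (W₁ ⊗[ℝ] W₂)))
  -- every element differs from a scalar by an element of J
  have hmemJ : ∀ x : (W₁ ⊗[ℝ] W₂), x - algebraMap ℝ (W₁ ⊗[ℝ] W₂) (ε x) ∈ J := by
    intro x
    induction x using TensorProduct.induction_on with
    | zero => simp
    | tmul a b =>
        have key : (a ⊗ₜ[ℝ] b : (W₁ ⊗[ℝ] W₂)) - algebraMap ℝ (W₁ ⊗[ℝ] W₂) (ε (a ⊗ₜ b)) =
            (a - algebraMap ℝ W₁ (ε₁ a)) ⊗ₜ[ℝ] b +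
            (ε₁ a) • ((1 : W₁) ⊗ₜ[ℝ] (b - algebraMap ℝ W₂ (ε₂ b))) := by
          rw [Algebra.TensorProduct.lift_tmul]
          rw [show (algebraMap ℝ (W₁ ⊗[ℝ] W₂)) (ε₁ a * ε₂ b) = (ε₁ a * ε₂ b) • (1 ⊗ₜ[ℝ] 1 : (W₁ ⊗[ℝ] W₂)) from by
            rw [Algebra.algebraMap_eq_smul_one]; rfl]
          rw [Algebra.algebraMap_eq_smul_one, Algebra.algebraMap_eq_smul_one]
          simp only [TensorProduct.tmul_sub, TensorProduct.sub_tmul, TensorProduct.tmul_smul,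
            ← TensorProduct.smul_tmul']
          module
        rw [key]
        refine add_mem ?_ ?_
        · apply Ideal.mem_sup_left
          have : ((a - algebraMap ℝ W₁ (ε₁ a)) ⊗ₜ[ℝ] b : (W₁ ⊗[ℝ] W₂)) =
              (Algebra.TensorProduct.includeLeft (S := ℝ) (a - algebraMap ℝ W₁ (ε₁ a))) * (1 ⊗ₜ b) := by
            simp [Algebra.TensorProduct.includeLeft_apply, Algebra.TensorProduct.tmul_mul_tmul]
          rw [this]
          exact Ideal.mul_mem_right _ _ (Ideal.mem_map_of_mem _ (hε₁ a))
        · apply Ideal.mem_sup_right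
          rw [Algebra.smul_def]
          refine Ideal.mul_mem_left _ _ ?_
          exact Ideal.mem_map_of_mem (Algebra.TensorProduct.includeRight (R := ℝ) (A := W₁)) (hε₂ b)
    | add x y hx hy =>
        have : (x + y) - algebraMap ℝ (W₁ ⊗[ℝ] W₂) (ε (x + y)) =
            (x - algebraMap ℝ (W₁ ⊗[ℝ] W₂) (ε x)) + (y - algebraMap ℝ (W₁ ⊗[ℝ] W₂) (ε y)) := by
          rw [map_add, map_add]; ring
        rw [this]; exact add_mem hx hy
  have hnilel : ∀ x : (W₁ ⊗[ℝ] W₂), IsNilpotent (x - algebraMap ℝ (W₁ ⊗[ℝ] W₂) (ε x)) :=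
    fun x => mem_nilradical.mp (hJnil (hmemJ x))
  -- local ring
  haveI : Nontrivial (W₁ ⊗[ℝ] W₂) := ε.toRingHom.domain_nontrivial
  haveI : IsNoetherianRing (W₁ ⊗[ℝ] W₂) := isNoetherian_of_tower ℝ inferInstance
  haveI hloc : IsLocalRing (W₁ ⊗[ℝ] W₂) := by
    refine IsLocalRing.of_isUnit_or_isUnit_one_sub_self fun a => ?_
    by_cases h : ε a = 0
    · right
      have : IsNilpotent a := by simpa [h] using hnilel a
      simpa using this.isUnit_one_sub
    · left
      have hu : IsUnit (algebraMap ℝ (W₁ ⊗[ℝ] W₂) (ε a)) :=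
        (isUnit_iff_ne_zero.mpr h).map (algebraMap ℝ (W₁ ⊗[ℝ] W₂))
      have := (hnilel a).isUnit_add_right_of_commute hu (Commute.all _ _)
      simpa using this
  -- maximal ideal is the kernel of ε
  have hsurj : Function.Surjective ε.toRingHom := fun r => ⟨algebraMap ℝ (W₁ ⊗[ℝ] W₂) r, ε.commutes r⟩
  have hker : RingHom.ker (ε.toRingHom) = IsLocalRing.maximalIdeal (W₁ ⊗[ℝ] W₂) :=
    IsLocalRing.ker_eq_maximalIdeal _ hsurj
  have hmnil : IsNilpotent (IsLocalRing.maximalIdeal (W₁ ⊗[ℝ] W₂)) := by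
    obtain ⟨n, hn⟩ := IsNoetherianRing.isNilpotent_nilradical (W₁ ⊗[ℝ] W₂)
    have hsub : IsLocalRing.maximalIdeal (W₁ ⊗[ℝ] W₂) ≤ nilradical (W₁ ⊗[ℝ] W₂) := by
      intro x hx
      rw [← hker, RingHom.mem_ker] at hx
      have hx' : ε x = 0 := hx
      refine mem_nilradical.mpr ?_
      simpa [hx'] using hnilel x
    have hle := Ideal.pow_right_mono hsub n
    rw [hn] at hle
    exact ⟨n, eq_bot_iff.mpr hle⟩
  refine ⟨hfd, hloc, hmnil, ?_, ?_⟩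
  · exact (algebraMap ℝ (IsLocalRing.ResidueField (W₁ ⊗[ℝ] W₂))).injective
  · intro y
    obtain ⟨x, rfl⟩ := Ideal.Quotient.mk_surjective y
    refine ⟨ε x, ?_⟩
    have : x - algebraMap ℝ (W₁ ⊗[ℝ] W₂) (ε x) ∈ IsLocalRing.maximalIdeal (W₁ ⊗[ℝ] W₂) := by
      rw [← hker, RingHom.mem_ker]
      show ε (x - algebraMap ℝ (W₁ ⊗[ℝ] W₂) (ε x)) = 0
      rw [map_sub, show ε (algebraMap ℝ (W₁ ⊗[ℝ] W₂) (ε x)) = ε x from ε.commutes _, sub_self]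
    have h1 : IsLocalRing.residue (W₁ ⊗[ℝ] W₂) x = IsLocalRing.residue (W₁ ⊗[ℝ] W₂) (algebraMap ℝ (W₁ ⊗[ℝ] W₂) (ε x)) := by
      rw [← sub_eq_zero, ← map_sub, ← RingHom.mem_ker, IsLocalRing.ker_residue]
      exact this
    exact h1.symm
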